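/- arXiv:2405.11250 — 6 statements merged into one kernel-verified Lean document; each statement's English description precedes it below -/
import Mathlib

section
/- In the causal ABA framework D_dag for a finite variable set V, the conflict-free sets of arrow assumptions are exactly those whose corresponding digraphs are acyclic: a set S of arrow assumptions arr_{xy} is conflict-free (i.e., does not derive the contrary of any of its own members via the cycle rules and mutual-exclusion rules) if and only if the directed graph (V, {(x,y) : arr_{xy} ∈ S}) is a DAG and S contains at most one of arr_{xy}, arr_{yx} for each pair x ≠ y. -/
/-- Assumptions of the causal ABA framework `D_dag`: an arrow assumption
`arr x y` for each ordered pair of distinct variables and a no-edge assumption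
`noe` for each unordered pair. -/
inductive DagAsm (V : Type) : Type
  | arr : V → V → DagAsm V
  | noe : Sym2 V → DagAsm V

namespace DagAsm

/-- The assumption set of `D_dag`. -/
def Asms (V : Type) : Set (DagAsm V) :=
  {a | ∃ x y : V, x ≠ y ∧ (a = arr x y ∨ a = noe s(x, y))}

/-- The attack relation induced by the rules of `D_dag`: mutual exclusion among
`{arr x y, arr y x, noe {x,y}}` for each pair `x ≠ y`, and, for each directed
cycle, the arrows along the cycle attack each arrow in it. -/
inductive Att (V : Type) : Set (DagAsm V) → DagAsm V → Prop
  | arrArr (x y : V) : x ≠ y → Att V {arr y x} (arr x y)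
  | noeArr (x y : V) : x ≠ y → Att V {noe s(x, y)} (arr x y)
  | arrNoe (x y : V) : x ≠ y → Att V {arr x y} (noe s(x, y))
  | cycle (l : List V) (x y : V) : 2 ≤ l.length → l.head? = l.getLast? →
      (x, y) ∈ l.zip l.tail →
      Att V {a | ∃ p ∈ l.zip l.tail, a = arr p.1 p.2} (arr x y)

/-- `S` attacks `T` if some subset of `S` attacks a member of `T`. -/
def Attacks {V : Type} (S T : Set (DagAsm V)) : Prop :=
  ∃ U ⊆ S, ∃ a ∈ T, Att V U a

def ConflictFree {V : Type} (S : Set (DagAsm V)) : Prop :=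
  S ⊆ Asms V ∧ ¬ Attacks S S

def Defends {V : Type} (S T : Set (DagAsm V)) : Prop :=
  ∀ U ⊆ Asms V, Attacks U T → Attacks S U

def Admissible {V : Type} (S : Set (DagAsm V)) : Prop :=
  ConflictFree S ∧ Defends S S

def Complete {V : Type} (S : Set (DagAsm V)) : Prop :=
  Admissible S ∧ ∀ T ⊆ Asms V, Defends S T → T ⊆ S

/-- Preferred: ⊆-maximal admissible. -/
def Preferred {V : Type} (S : Set (DagAsm V)) : Prop :=
  Admissible S ∧ ∀ T : Set (DagAsm V), Admissible T → S ⊆ T → T = S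

/-- Stable: conflict-free and attacks every assumption outside itself. -/
def Stable {V : Type} (S : Set (DagAsm V)) : Prop :=
  ConflictFree S ∧ ∀ a ∈ Asms V, a ∉ S → Attacks S {a}

/-- The digraph `G(S)` induced by the arrow assumptions in `S`. -/
def graphOf {V : Type} (S : Set (DagAsm V)) : V → V → Prop :=
  fun x y => arr x y ∈ S

end DagAsm

lemma chain_transGen {α : Type} (r : α → α → Prop) :
    ∀ (l : List α), (∀ p ∈ l.zip l.tail, r p.1 p.2) → ∀ a b, l.head? = some a →
      l.getLast? = some b → 2 ≤ l.length → Relation.TransGen r a b := by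
  intro l
  induction l with
  | nil => intro _ a b h; simp at h
  | cons x t ih =>
    intro hr a b ha hb hlen
    have hax : a = x := by simpa using ha.symm
    subst hax
    match t with
    | [] => simp at hlen
    | y :: t' =>
      have hxy : r a y := hr (a, y) (by simp)
      have ht : ∀ p ∈ (y::t').zip (y::t').tail, r p.1 p.2 := by
        intro p hp; exact hr p (by simp [List.zip] at hp ⊢; tauto)
      match t' with
      | [] =>
        simp [List.getLast?] at hb
        subst hb; exact Relation.TransGen.single hxy
      | z :: t'' =>
        have hb' : (y::z::t'').getLast? = some b := by
          rw [← hb]; simp [List.getLast?_cons_cons]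
        exact Relation.TransGen.head hxy (ih ht y b rfl hb' (by simp))

lemma transGen_chain {α : Type} (r : α → α → Prop) {x y : α}
    (h : Relation.TransGen r x y) :
    ∃ l : List α, 2 ≤ l.length ∧ l.head? = some x ∧ l.getLast? = some y ∧
      ∀ p ∈ l.zip l.tail, r p.1 p.2 := by
  refine Relation.TransGen.head_induction_on
    (motive := fun c _ => ∃ l : List α, 2 ≤ l.length ∧ l.head? = some c ∧
      l.getLast? = some y ∧ ∀ p ∈ l.zip l.tail, r p.1 p.2) h ?_ ?_
  · intro c hc; exact ⟨[c, y], by simp, rfl, rfl, by simp_all⟩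
  · intro c d hcd hd ih
    obtain ⟨l, hlen, hhd, hlast, hch⟩ := ih
    match l with
    | e :: t =>
      have hed : e = d := by simpa using hhd
      subst hed
      refine ⟨c :: e :: t, by simp, rfl, by rw [← hlast]; simp, ?_⟩
      intro p hp
      simp at hp
      rcases hp with h1 | h2
      · subst h1; exact hcd
      · exact hch p (by simpa using h2)

/-- a set `S` of arrow assumptions is conflict-free in `D_dag`
(i.e. no subset of `S` derives the contrary of a member of `S` via the cycle
rules and mutual-exclusion rules) iff the directed graph
`(V, {(x,y) : arr x y ∈ S})` is a DAG and `S` contains at most one of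
`arr x y`, `arr y x` for each pair `x ≠ y`. -/
theorem conflictFree_iff_dag {V : Type} (S : Set (DagAsm V))
    (hS : S ⊆ {a | ∃ x y : V, x ≠ y ∧ a = DagAsm.arr x y}) :
    DagAsm.ConflictFree S ↔
      ((∀ x : V, ¬ Relation.TransGen (fun a b => DagAsm.arr a b ∈ S) x x) ∧
        ∀ x y : V, x ≠ y → ¬ (DagAsm.arr x y ∈ S ∧ DagAsm.arr y x ∈ S)) := by
  constructor
  · rintro ⟨-, hno⟩
    constructor
    · intro x hx
      obtain ⟨l, hlen, hhd, hlast, hch⟩ := transGen_chain _ hx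
      apply hno
      refine ⟨{a | ∃ p ∈ l.zip l.tail, a = DagAsm.arr p.1 p.2}, ?_, ?_⟩
      · rintro a ⟨p, hp, rfl⟩; exact hch p hp
      · match l, hlen with
        | a :: b :: t, _ =>
          refine ⟨DagAsm.arr a b, hch (a, b) (by simp), ?_⟩
          exact DagAsm.Att.cycle (a :: b :: t) a b (by simp)
            (by rw [hhd, hlast]) (by simp)
    · intro x y hxy ⟨h1, h2⟩
      exact hno ⟨{DagAsm.arr y x}, by simpa using h2, DagAsm.arr x y, h1,
        DagAsm.Att.arrArr x y hxy⟩
  · rintro ⟨hacyc, h2c⟩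
    refine ⟨fun a ha => ?_, ?_⟩
    · obtain ⟨x, y, hxy, rfl⟩ := hS ha
      exact ⟨x, y, hxy, Or.inl rfl⟩
    · rintro ⟨U, hU, a, ha, hatt⟩
      cases hatt with
      | arrArr x y h =>
        exact h2c x y h ⟨ha, hU rfl⟩
      | noeArr x y h =>
        obtain ⟨a, b, -, hab⟩ := hS (hU rfl)
        exact nomatch hab
      | arrNoe x y h =>
        obtain ⟨a, b, -, hab⟩ := hS ha
        exact nomatch hab
      | cycle l x y hlen hcyc hmem =>
        match l, hlen with
        | c :: t, hlen2 =>
          have hch : ∀ p ∈ (c :: t).zip (c :: t).tail,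
              DagAsm.arr p.1 p.2 ∈ S := fun p hp => hU ⟨p, hp, rfl⟩
          have hlast : (c :: t).getLast? = some c := by rw [← hcyc]; rfl
          exact hacyc c (chain_transGen _ (c :: t) hch c c rfl hlast hlen2)
end

section
/- In the causal ABA framework D_dag, preferred and stable extensions coincide: every preferred extension is stable. -/
open DagAsm in
lemma attacks_mono {V : Type} {S S' T : Set (DagAsm V)} (h : S ⊆ S')
    (hA : DagAsm.Attacks S T) : DagAsm.Attacks S' T := by
  obtain ⟨U, hU, a, ha, hatt⟩ := hA
  exact ⟨U, hU.trans h, a, ha, hatt⟩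

open DagAsm in
lemma att_noe_inv {V : Type} {W : Set (DagAsm V)} {q : Sym2 V}
    (h : DagAsm.Att V W (noe q)) :
    ∃ a b : V, a ≠ b ∧ q = s(a, b) ∧ W = {arr a b} := by
  cases h with
  | arrNoe a b hab => exact ⟨a, b, hab, rfl, rfl⟩

open DagAsm in
/-- Key lemma: a preferred extension contains one of the three assumptions
for each pair of distinct variables. -/
lemma pref_key {V : Type} {S : Set (DagAsm V)} (hS : DagAsm.Preferred S)
    (x y : V) (hxy : x ≠ y) :
    arr x y ∈ S ∨ arr y x ∈ S ∨ noe s(x, y) ∈ S := by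
  by_contra hcon
  push_neg at hcon
  obtain ⟨hxyS, hyxS, hnS⟩ := hcon
  obtain ⟨⟨⟨hSA, hCF⟩, hDef⟩, hMax⟩ := hS
  set n : DagAsm V := noe s(x, y) with hn
  set T : Set (DagAsm V) := insert n S with hT
  have hTA : T ⊆ Asms V := by
    intro a ha
    rcases ha with ha | ha
    · exact ⟨x, y, hxy, Or.inr ha⟩
    · exact hSA ha
  -- any arrow in T whose pair matches {x,y} is impossible
  have harrT : ∀ a b : V, arr a b ∈ T → arr a b ∈ S := by
    intro a b hab
    rcases hab with h | h
    · exact absurd h (by simp [hn])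
    · exact h
  have hsym : ∀ a b : V, s(a, b) = s(x, y) → arr a b ∉ S := by
    intro a b hab
    rw [Sym2.eq_iff] at hab
    rcases hab with ⟨rfl, rfl⟩ | ⟨rfl, rfl⟩
    · exact hxyS
    · exact hyxS
  have hCFT : ¬ Attacks T T := by
    rintro ⟨U, hUT, a, haT, hatt⟩
    cases hatt with
    | arrArr a b hab =>
        -- U = {arr b a}, target arr a b
        have hba : arr b a ∈ S := harrT _ _ (hUT rfl)
        rcases haT with h | h
        · exact absurd h (by simp [hn])
        · exact hCF ⟨{arr b a}, by simpa using hba, arr a b, h, Att.arrArr a b hab⟩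
    | noeArr a b hab =>
        -- U = {noe s(a,b)}, target arr a b
        have habS : arr a b ∈ S := by
          rcases haT with h | h
          · exact absurd h (by simp [hn])
          · exact h
        have hnoe : noe s(a, b) ∈ T := hUT rfl
        rcases hnoe with h | h
        · -- noe s(a,b) = n, so s(a,b) = s(x,y), so arr a b ∉ S
          have : s(a, b) = s(x, y) := by
            simpa [hn] using h
          exact hsym a b this habS
        · exact hCF ⟨{noe s(a, b)}, by simpa using h, arr a b, habS, Att.noeArr a b hab⟩
    | arrNoe a b hab =>
        -- U = {arr a b}, target noe s(a,b)
        have habS : arr a b ∈ S := harrT _ _ (hUT rfl)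
        rcases haT with h | h
        · have : s(a, b) = s(x, y) := by simpa [hn] using h
          exact hsym a b this habS
        · exact hCF ⟨{arr a b}, by simpa using habS, noe s(a, b), h, Att.arrNoe a b hab⟩
    | cycle l a b hl hhead hmem =>
        -- U consists of arrows only, hence U ⊆ S
        have hUS : {c : DagAsm V | ∃ p ∈ l.zip l.tail, c = arr p.1 p.2} ⊆ S := by
          intro c hc
          obtain ⟨p, hp, rfl⟩ := hc
          exact harrT _ _ (hUT ⟨p, hp, rfl⟩)
        have habS : arr a b ∈ S := by
          rcases haT with h | h
          · exact absurd h (by simp [hn])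
          · exact h
        exact hCF ⟨_, hUS, arr a b, habS, Att.cycle l a b hl hhead hmem⟩
  have hDefT : Defends T T := by
    intro U hU hAtt
    obtain ⟨W, hWU, a, haT, hatt⟩ := hAtt
    rcases haT with h | haS
    · -- target is n = noe s(x,y); attack must be arrNoe
      rw [h, hn] at hatt
      obtain ⟨a, b, hab, hq, hWeq⟩ := att_noe_inv hatt
      have habU : arr a b ∈ U := hWU (by rw [hWeq]; rfl)
      refine ⟨{noe s(a, b)}, ?_, arr a b, habU, Att.noeArr a b hab⟩
      intro c hc
      left
      rw [Set.eq_of_mem_singleton hc, hn, hq]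
    · -- attack on S; S defends itself
      exact attacks_mono (Set.subset_insert _ _) (hDef U hU ⟨W, hWU, a, haS, hatt⟩)
  have hTS : T = S := hMax T ⟨⟨hTA, hCFT⟩, hDefT⟩ (Set.subset_insert _ _)
  exact hnS (hTS ▸ Set.mem_insert n S)

/-- in `D_dag`, preferred and stable extensions coincide:
every preferred extension is stable (the converse being a general fact). -/
theorem preferred_iff_stable {V : Type} (S : Set (DagAsm V)) :
    DagAsm.Preferred S ↔ DagAsm.Stable S := by
  open DagAsm in
  constructor
  · intro hS
    refine ⟨hS.1.1, ?_⟩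
    rintro a ⟨x, y, hxy, ha | ha⟩ haS <;> subst ha
    · -- a = arr x y ∉ S
      rcases pref_key hS x y hxy with h | h | h
      · exact absurd h haS
      · exact ⟨{arr y x}, by simpa using h, arr x y, rfl, Att.arrArr x y hxy⟩
      · exact ⟨{noe s(x, y)}, by simpa using h, arr x y, rfl, Att.noeArr x y hxy⟩
    · -- a = noe s(x,y) ∉ S
      rcases pref_key hS x y hxy with h | h | h
      · exact ⟨{arr x y}, by simpa using h, noe s(x, y), rfl, Att.arrNoe x y hxy⟩
      · refine ⟨{arr y x}, by simpa using h, noe s(x, y), rfl, ?_⟩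
        have : s(x, y) = s(y, x) := Sym2.eq_swap
        rw [this]
        exact Att.arrNoe y x hxy.symm
      · exact absurd h haS
  · intro hS
    obtain ⟨⟨hSA, hCF⟩, hAtt⟩ := hS
    have hAdm : Admissible S := by
      refine ⟨⟨hSA, hCF⟩, ?_⟩
      intro U hUA hA
      by_cases hUS : U ⊆ S
      · exact absurd (attacks_mono hUS hA) hCF
      · obtain ⟨b, hbU, hbS⟩ := Set.not_subset.mp hUS
        obtain ⟨W, hW, c, hc, hatt⟩ := hAtt b (hUA hbU) hbS
        exact ⟨W, hW, b, by simpa using hc ▸ hbU, by rwa [Set.eq_of_mem_singleton hc] at hatt⟩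
    refine ⟨hAdm, ?_⟩
    intro T hT hST
    by_contra hne
    have hTS : ¬ T ⊆ S := fun h => hne (Set.Subset.antisymm h hST)
    obtain ⟨b, hbT, hbS⟩ := Set.not_subset.mp hTS
    have hb : Attacks S {b} := hAtt b (hT.1.1 hbT) hbS
    have hST' : Attacks S T := by
      obtain ⟨W, hW, c, hc, hatt⟩ := hb
      exact ⟨W, hW, c, by rwa [Set.eq_of_mem_singleton hc], hatt⟩
    obtain ⟨W, hW, c, hc, hatt⟩ := hT.2 S hSA hST'
    exact hT.1.2 ⟨W, hW, c, hST hc, hatt⟩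
end

section
/- In the full causal ABA framework D_ds, for any stable extension S, if the conditional independence assumption (x ⫫ y | Z) belongs to S, then x and y are d-separated given Z in the DAG G(S) induced by the arrow assumptions in S. -/
/-- An x-y-path in the digraph `E`: a sequence of distinct vertices from `x` to
`y` whose consecutive members are adjacent (in either direction). -/
def IsPath {V : Type} (E : V → V → Prop) (x y : V) (l : List V) : Prop :=
  l.Nodup ∧ l.head? = some x ∧ l.getLast? = some y ∧
    l.Chain' (fun a b => E a b ∨ E b a)

/-- `l` is `Z`-active in `E`: every interior vertex that is a collider lies in
`Z` or has a descendant in `Z`, and every interior non-collider lies outside `Z`. -/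
def ZActive {V : Type} (E : V → V → Prop) (Z : Set V) (l : List V) : Prop :=
  ∀ u v w : V, [u, v, w] <:+: l →
    ((E u v ∧ E w v) → (v ∈ Z ∨ ∃ z ∈ Z, Relation.TransGen E v z)) ∧
    (¬ (E u v ∧ E w v) → v ∉ Z)

/-- `x` and `y` are d-connected given `Z` iff a `Z`-active x-y-path exists. -/
def DConnected {V : Type} (E : V → V → Prop) (Z : Set V) (x y : V) : Prop :=
  ∃ l : List V, IsPath E x y l ∧ ZActive E Z l

/-- d-separation: the negation of d-connection. -/
def DSeparated {V : Type} (E : V → V → Prop) (Z : Set V) (x y : V) : Prop :=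
  ¬ DConnected E Z x y

/-- `v` is a collider on the path `l` (w.r.t. the edge relation `F`). -/
def ColliderOn {V : Type} (F : V → V → Prop) (l : List V) (v : V) : Prop :=
  ∃ u w : V, [u, v, w] <:+: l ∧ F u v ∧ F w v

/-- An x-y-collider-tree with underlying path `p`: `p` is a path of the graph
`F` and every vertex of `F` not on `p` is a descendant (within `F`) of some
collider of `p`. -/
def IsColliderTree {V : Type} (F : V → V → Prop) (x y : V) (p : List V) : Prop :=
  IsPath F x y p ∧
    ∀ v : V, (∃ u : V, F u v ∨ F v u) → v ∉ p →
      ∃ c : V, ColliderOn F p c ∧ Relation.TransGen F c v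

/-- Assumptions of the full causal ABA framework `D_ds`: arrows, no-edge
assumptions, and conditional independence assumptions `(x ⫫ y | Z)`. -/
inductive CAsm (V : Type) : Type
  | arr : V → V → CAsm V
  | noe : Sym2 V → CAsm V
  | ind : V → V → Set V → CAsm V

namespace CAsm

/-- The assumption set of `D_ds`. -/
def Asms (V : Type) : Set (CAsm V) :=
  {a | (∃ x y : V, x ≠ y ∧ (a = arr x y ∨ a = noe s(x, y))) ∨
       (∃ (x y : V) (Z : Set V), x ≠ y ∧ x ∉ Z ∧ y ∉ Z ∧ a = ind x y Z)}

/-- The attack relation induced by the rules of `D_ds`: the rules of `D_dag`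
(mutual exclusion and cycle rules) together with, for each `Z`-active
x-y-collider-tree, an attack from its set of arrow assumptions on `(x ⫫ y | Z)`. -/
inductive Att (V : Type) : Set (CAsm V) → CAsm V → Prop
  | arrArr (x y : V) : x ≠ y → Att V {arr y x} (arr x y)
  | noeArr (x y : V) : x ≠ y → Att V {noe s(x, y)} (arr x y)
  | arrNoe (x y : V) : x ≠ y → Att V {arr x y} (noe s(x, y))
  | cycle (l : List V) (x y : V) : 2 ≤ l.length → l.head? = l.getLast? →
      (x, y) ∈ l.zip l.tail →
      Att V {a | ∃ p ∈ l.zip l.tail, a = arr p.1 p.2} (arr x y)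
  | tree (F : V → V → Prop) (p : List V) (x y : V) (Z : Set V) :
      x ≠ y → IsColliderTree F x y p → ZActive F Z p →
      Att V {a | ∃ u v : V, F u v ∧ a = arr u v} (ind x y Z)

def Attacks {V : Type} (S T : Set (CAsm V)) : Prop :=
  ∃ U ⊆ S, ∃ a ∈ T, Att V U a

def ConflictFree {V : Type} (S : Set (CAsm V)) : Prop :=
  S ⊆ Asms V ∧ ¬ Attacks S S

def Defends {V : Type} (S T : Set (CAsm V)) : Prop :=
  ∀ U ⊆ Asms V, Attacks U T → Attacks S U

def Admissible {V : Type} (S : Set (CAsm V)) : Prop :=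
  ConflictFree S ∧ Defends S S

/-- Complete: admissible and containing every assumption set it defends. -/
def Complete {V : Type} (S : Set (CAsm V)) : Prop :=
  Admissible S ∧ ∀ T ⊆ Asms V, Defends S T → T ⊆ S

/-- Stable: conflict-free and attacking every assumption outside itself. -/
def Stable {V : Type} (S : Set (CAsm V)) : Prop :=
  ConflictFree S ∧ ∀ a ∈ Asms V, a ∉ S → Attacks S {a}

/-- The digraph `G(S)` induced by the arrow assumptions in `S`. -/
def graphOf {V : Type} (S : Set (CAsm V)) : V → V → Prop :=
  fun x y => arr x y ∈ S

end CAsm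

private lemma chain'_pair_iff {V : Type} (R : V → V → Prop) (l : List V) :
    l.Chain' R ↔ ∀ a b : V, [a, b] <:+: l → R a b := by
  induction l with
  | nil =>
    simp only [List.Chain', List.isChain_nil, true_iff]
    intro a b h
    simpa using h.length_le
  | cons p t ih =>
    cases t with
    | nil =>
      simp only [List.Chain', List.isChain_singleton, true_iff]
      intro a b h
      simpa using h.length_le
    | cons q t' =>
      simp only [List.Chain'] at ih ⊢
      rw [List.isChain_cons_cons, ih]
      constructor
      · rintro ⟨hpq, hc⟩ a b hinf
        rcases List.infix_cons_iff.1 hinf with hpre | hinf'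
        · rw [List.cons_prefix_cons] at hpre
          obtain ⟨rfl, hpre⟩ := hpre
          rw [List.cons_prefix_cons] at hpre
          obtain ⟨rfl, -⟩ := hpre
          exact hpq
        · exact hc a b hinf'
      · intro hall
        refine ⟨hall p q ⟨[], t', rfl⟩, fun a b hinf => hall a b (hinf.trans ⟨[p], [], by simp⟩)⟩

private lemma restrict_transGen {V : Type} {E : V → V → Prop} (c z : V) :
    ∀ {a b : V}, Relation.TransGen E a b → Relation.ReflTransGen E c a →
      Relation.ReflTransGen E b z →
      Relation.TransGen
        (fun p q => E p q ∧ Relation.ReflTransGen E c p ∧ Relation.ReflTransGen E q z) a b := by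
  intro a b h
  induction h using Relation.TransGen.head_induction_on with
  | single hab => exact fun hca hbz => Relation.TransGen.single ⟨hab, hca, hbz⟩
  | @head a' c' hac htcb ih =>
    intro hca hbz
    have hcz' : Relation.ReflTransGen E c' z := (htcb.to_reflTransGen).trans hbz
    exact (ih (hca.tail hac) hbz).head ⟨hac, hca, hcz'⟩

/-- in `D_ds`, for any stable extension `S`, if the conditional
independence assumption `(x ⫫ y | Z)` belongs to `S`, then `x` and `y` are
d-separated given `Z` in the DAG `G(S)` induced by the arrow assumptions of `S`. -/
theorem stable_ind_implies_dsep {V : Type} (S : Set (CAsm V)) (hS : CAsm.Stable S)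
    (x y : V) (Z : Set V) (h : CAsm.ind x y Z ∈ S) :
    DSeparated (CAsm.graphOf S) Z x y := by
  rintro ⟨l, hpath, hact⟩
  obtain ⟨⟨hsub, hnoatt⟩, -⟩ := hS
  -- x ≠ y
  have hxy : x ≠ y := by
    rcases hsub h with ⟨x', y', hne, heq | heq⟩ | ⟨x', y', Z', hne, -, -, heq⟩
    · exact absurd heq (by simp)
    · exact absurd heq (by simp)
    · injection heq with h1 h2 h3
      subst h1; subst h2; exact hne
  set E : V → V → Prop := CAsm.graphOf S with hE
  -- adjacency on l
  set Adj : V → V → Prop := fun a b => [a, b] <:+: l ∨ [b, a] <:+: l with hAdj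
  set Coll : V → Prop := fun c => ∃ a b : V, [a, c, b] <:+: l ∧ E a c ∧ E b c with hColl
  set F : V → V → Prop := fun u v => E u v ∧
    (Adj u v ∨ ∃ c z : V, Coll c ∧ z ∈ Z ∧
      Relation.ReflTransGen E c u ∧ Relation.ReflTransGen E v z) with hF
  have hFE : ∀ u v, F u v → E u v := fun u v hf => hf.1
  obtain ⟨hnd, hhd, hlast, hchain⟩ := hpath
  have hpairE : ∀ a b : V, [a, b] <:+: l → (E a b ∨ E b a) :=
    (chain'_pair_iff _ l).1 hchain
  -- colliders on l agree for E and F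
  have hFtrip : ∀ u v w : V, [u, v, w] <:+: l → ((F u v ∧ F w v) ↔ (E u v ∧ E w v)) := by
    intro u v w htr
    have ha : [u, v] <:+: [u, v, w] := ⟨[], [w], rfl⟩
    have hb : [v, w] <:+: [u, v, w] := ⟨[u], [], rfl⟩
    have h1 : [u, v] <:+: l := ha.trans htr
    have h2 : [v, w] <:+: l := hb.trans htr
    constructor
    · rintro ⟨h3, h4⟩; exact ⟨h3.1, h4.1⟩
    · rintro ⟨h3, h4⟩
      exact ⟨⟨h3, Or.inl (Or.inl h1)⟩, ⟨h4, Or.inl (Or.inr h2)⟩⟩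
  -- descendants-of-colliders: restricted transgen lands in F
  have hmono : ∀ (c z : V), Coll c → z ∈ Z → ∀ {a b : V},
      Relation.TransGen (fun p q => E p q ∧ Relation.ReflTransGen E c p ∧
        Relation.ReflTransGen E q z) a b → Relation.TransGen F a b := by
    intro c z hcoll hz a b hab
    exact Relation.TransGen.mono (fun p q hpq => ⟨hpq.1, Or.inr ⟨c, z, hcoll, hz, hpq.2.1, hpq.2.2⟩⟩) a b hab
  -- F-path
  have hFpath : IsPath F x y l := by
    refine ⟨hnd, hhd, hlast, (chain'_pair_iff _ l).2 ?_⟩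
    intro a b hinf
    rcases hpairE a b hinf with hE1 | hE1
    · exact Or.inl ⟨hE1, Or.inl (Or.inl hinf)⟩
    · exact Or.inr ⟨hE1, Or.inl (Or.inr hinf)⟩
  -- F-active
  have hFact : ZActive F Z l := by
    intro u v w htr
    obtain ⟨hc1, hc2⟩ := hact u v w htr
    constructor
    · intro hFc
      have hEc := (hFtrip u v w htr).1 hFc
      rcases hc1 hEc with hvZ | ⟨z, hz, htg⟩
      · exact Or.inl hvZ
      · have hcoll : Coll v := ⟨u, w, htr, hEc.1, hEc.2⟩
        exact Or.inr ⟨z, hz, hmono v z hcoll hz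
          (restrict_transGen v z htg Relation.ReflTransGen.refl Relation.ReflTransGen.refl)⟩
    · intro hnF
      exact hc2 (fun hEc => hnF ((hFtrip u v w htr).2 hEc))
  -- collider tree
  have hFtree : IsColliderTree F x y l := by
    refine ⟨hFpath, ?_⟩
    intro v ⟨u, hedge⟩ hvl
    have key : ∃ c z : V, Coll c ∧ z ∈ Z ∧ Relation.ReflTransGen E c v ∧
        Relation.ReflTransGen E v z := by
      rcases hedge with ⟨hEuv, hadj | ⟨c, z, hcoll, hz, hcu, hvz⟩⟩ |
          ⟨hEvu, hadj | ⟨c, z, hcoll, hz, hcv, huz⟩⟩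
      · exact absurd (hadj.elim (fun hi => hi.sublist.subset (by simp))
          (fun hi => hi.sublist.subset (by simp))) hvl
      · exact ⟨c, z, hcoll, hz, hcu.tail hEuv, hvz⟩
      · exact absurd (hadj.elim (fun hi => hi.sublist.subset (by simp))
          (fun hi => hi.sublist.subset (by simp))) hvl
      · exact ⟨c, z, hcoll, hz, hcv, Relation.ReflTransGen.head hEvu huz⟩
    obtain ⟨c, z, hcoll, hz, hcv, hvz⟩ := key
    obtain ⟨a, b, htr, hEac, hEbc⟩ := hcoll
    have hcl : c ∈ l := htr.sublist.subset (by simp)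
    have hcv' : Relation.TransGen E c v := by
      rcases Relation.reflTransGen_iff_eq_or_transGen.1 hcv with rfl | htg
      · exact absurd hcl hvl
      · exact htg
    refine ⟨c, ?_, hmono c z ⟨a, b, htr, hEac, hEbc⟩ hz
      (restrict_transGen c z hcv' Relation.ReflTransGen.refl hvz)⟩
    exact ⟨a, b, htr, ((hFtrip a c b htr).2 ⟨hEac, hEbc⟩).1, ((hFtrip a c b htr).2 ⟨hEac, hEbc⟩).2⟩
  -- the attack
  exact hnoatt ⟨{a | ∃ u v : V, F u v ∧ a = CAsm.arr u v},
    by rintro a ⟨u, v, hf, rfl⟩; exact hf.1,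
    CAsm.ind x y Z, h, CAsm.Att.tree F l x y Z hxy hFtree hFact⟩
end

section
/- In the full causal ABA framework D_ds, for any stable extension S, if x and y are d-separated given Z in G(S), then the assumption (x ⫫ y | Z) belongs to S. -/
/-- in `D_ds`, for any stable extension `S`, if `x` and `y` are
d-separated given `Z` in `G(S)`, then the assumption `(x ⫫ y | Z)` belongs to `S`. -/
theorem stable_dsep_implies_ind {V : Type} (S : Set (CAsm V)) (hS : CAsm.Stable S)
    (x y : V) (hxy : x ≠ y) (Z : Set V) (hx : x ∉ Z) (hy : y ∉ Z)
    (hsep : DSeparated (CAsm.graphOf S) Z x y) :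
    CAsm.ind x y Z ∈ S := by
  by_contra hind
  obtain ⟨hcf, hstab⟩ := hS
  have hasm : CAsm.ind x y Z ∈ CAsm.Asms V := Or.inr ⟨x, y, Z, hxy, hx, hy, rfl⟩
  obtain ⟨U, hUS, a, ha, hatt⟩ := hstab _ hasm hind
  rw [Set.mem_singleton_iff] at ha
  subst ha
  -- no two opposite arrows in S
  have hnoboth : ∀ u v : V, u ≠ v → CAsm.arr u v ∈ S → CAsm.arr v u ∈ S → False := by
    intro u v huv h1 h2
    exact hcf.2 ⟨{CAsm.arr v u}, by simpa using h2, CAsm.arr u v, h1,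
      CAsm.Att.arrArr u v huv⟩
  cases hatt with
  | tree F p x' y' Z' hne htree hact =>
    have hFS : ∀ u v : V, F u v → CAsm.arr u v ∈ S := fun u v h => hUS ⟨u, v, h, rfl⟩
    obtain ⟨⟨hnd, hhd, hlast, hch⟩, _⟩ := htree
    apply hsep
    refine ⟨p, ⟨hnd, hhd, hlast, hch.imp fun a b h =>
      h.imp (hFS _ _) (hFS _ _)⟩, ?_⟩
    intro u v w hinf
    obtain ⟨hcol, hncol⟩ := hact u v w hinf
    have hnd3 : ([u, v, w] : List V).Nodup := hnd.sublist hinf.sublist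
    have huv : u ≠ v := by simp at hnd3; tauto
    have hwv : w ≠ v := by simp at hnd3; tauto
    have hch3 : ([u, v, w] : List V).Chain' (fun a b => F a b ∨ F b a) :=
      hch.infix hinf
    have he1 : F u v ∨ F v u := (List.isChain_cons_cons.mp hch3).1
    have he2 : F v w ∨ F w v := (List.isChain_cons_cons.mp (List.isChain_cons_cons.mp hch3).2).1
    constructor
    · rintro ⟨h1, h2⟩
      by_cases hF : F u v ∧ F w v
      · refine (hcol hF).imp id fun ⟨z, hz, ht⟩ => ⟨z, hz, Relation.TransGen.mono (fun a b h => hFS a b h) _ _ ht⟩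
      · exfalso
        rcases not_and_or.mp hF with h | h
        · exact hnoboth u v huv h1 (hFS v u (he1.resolve_left h))
        · exact hnoboth w v hwv h2 (hFS v w (he2.resolve_right h))
    · intro hnc
      by_cases hF : F u v ∧ F w v
      · exact absurd ⟨hFS u v hF.1, hFS w v hF.2⟩ hnc
      · exact hncol hF
end

section
/- In the full causal ABA framework D_ds, for any complete extension S (not necessarily maximal), if (x ⫫ y | Z) ∈ S then x and y are d-separated given Z in G(S); however, the empty set is a complete extension of D_ds, showing the converse fails for complete semantics. -/
section Aux

variable {V : Type}

lemma exists_cons_cons_of_head_last {l : List V} {x y : V}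
    (hh : l.head? = some x) (hl : l.getLast? = some y) (hxy : x ≠ y) :
    ∃ a b t, l = a :: b :: t := by
  match l with
  | [] => simp at hh
  | [a] =>
    simp at hh hl
    exact absurd (hh.symm.trans hl) hxy
  | a :: b :: t => exact ⟨a, b, t, rfl⟩

lemma att_nonempty {U : Set (CAsm V)} {a : CAsm V} (h : CAsm.Att V U a) :
    U.Nonempty := by
  cases h with
  | arrArr x y h => exact ⟨_, rfl⟩
  | noeArr x y h => exact ⟨_, rfl⟩
  | arrNoe x y h => exact ⟨_, rfl⟩
  | cycle l x y h1 h2 h3 => exact ⟨CAsm.arr x y, ⟨(x, y), h3, rfl⟩⟩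
  | tree F p x y Z hxy hct hza =>
    obtain ⟨⟨hnd, hh, hl, hch⟩, _⟩ := hct
    obtain ⟨a, b, t, rfl⟩ := exists_cons_cons_of_head_last hh hl hxy
    rcases (List.isChain_cons_cons.mp hch).1 with h | h
    · exact ⟨CAsm.arr a b, a, b, h, rfl⟩
    · exact ⟨CAsm.arr b a, b, a, h, rfl⟩

lemma transGen_lift {E F : V → V → Prop} {c v : V}
    (hF : ∀ a b, Relation.ReflTransGen E c a → E a b → F a b)
    (h : Relation.TransGen E c v) : Relation.TransGen F c v := by
  induction h with
  | single h' => exact Relation.TransGen.single (hF _ _ Relation.ReflTransGen.refl h')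
  | tail hcb h' ih => exact ih.tail (hF _ _ hcb.to_reflTransGen h')

lemma chain'_of_infix {R S : V → V → Prop} {l : List V}
    (h : l.Chain' R) (himp : ∀ a b, [a, b] <:+: l → R a b → S a b) :
    l.Chain' S := by
  induction l with
  | nil => exact List.isChain_nil
  | cons a t ih =>
    match t, h with
    | [], _ => exact List.isChain_singleton _
    | b :: t, h =>
      simp only [List.Chain', List.isChain_cons_cons] at h ⊢
      refine ⟨himp a b ⟨[], t, rfl⟩ h.1, ih h.2 ?_⟩
      intro u v hinf hR
      exact himp u v (hinf.trans ⟨[a], [], by simp⟩) hR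

end Aux

/-- in `D_ds`, for any complete extension `S` (not necessarily
maximal), `(x ⫫ y | Z) ∈ S` implies that `x` and `y` are d-separated given `Z`
in `G(S)`; however, the empty set is a complete extension, and in its
(fully disconnected) graph every pair is d-separated while the empty set contains
no independence assumption — so the converse fails for complete semantics. -/
theorem complete_ind_implies_dsep_but_not_conversely {V : Type} [Nontrivial V] :
    (∀ S : Set (CAsm V), CAsm.Complete S → ∀ (x y : V) (Z : Set V),
      CAsm.ind x y Z ∈ S → DSeparated (CAsm.graphOf S) Z x y) ∧
    CAsm.Complete (∅ : Set (CAsm V)) ∧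
    (∀ x y : V, x ≠ y →
      DSeparated (CAsm.graphOf (∅ : Set (CAsm V))) (∅ : Set V) x y ∧
        CAsm.ind x y ∅ ∉ (∅ : Set (CAsm V))) := by
  refine ⟨?_, ?_, ?_⟩
  · -- Part 1: ind in a complete (in fact conflict-free) extension implies d-separation
    intro S hS x y Z hind
    obtain ⟨⟨⟨hSA, hnat⟩, _⟩, _⟩ := hS
    have hxy : x ≠ y := by
      rcases hSA hind with ⟨x', y', hne, h | h⟩ | ⟨x', y', Z', hne, _, _, h⟩
      · cases h
      · cases h
      · cases h; exact hne
    rintro ⟨l, ⟨hnd, hh, hl, hch⟩, hza⟩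
    set E : V → V → Prop := CAsm.graphOf S with hE
    set F : V → V → Prop := fun u v => E u v ∧
        (([u, v] <:+: l ∨ [v, u] <:+: l) ∨
          ∃ c, ColliderOn E l c ∧ Relation.ReflTransGen E c u) with hFdef
    -- lifting descendants of colliders from E to F
    have hlift : ∀ c : V, ColliderOn E l c → ∀ v : V,
        Relation.TransGen E c v → Relation.TransGen F c v := by
      intro c hc v h
      exact transGen_lift (fun a b hca hab => ⟨hab, Or.inr ⟨c, hc, hca⟩⟩) h
    -- colliders transfer from E to F
    have hcollF : ∀ c : V, ColliderOn E l c → ColliderOn F l c := by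
      rintro c ⟨u, w, hinf, hu, hw⟩
      refine ⟨u, w, hinf, ⟨hu, Or.inl (Or.inl ?_)⟩, ⟨hw, Or.inl (Or.inr ?_)⟩⟩
      · exact List.IsInfix.trans ⟨[], [w], rfl⟩ hinf
      · exact List.IsInfix.trans ⟨[u], [], rfl⟩ hinf
    have hct : IsColliderTree F x y l := by
      refine ⟨⟨hnd, hh, hl, ?_⟩, ?_⟩
      · refine chain'_of_infix hch ?_
        rintro a b hinf (h | h)
        · exact Or.inl ⟨h, Or.inl (Or.inl hinf)⟩
        · exact Or.inr ⟨h, Or.inl (Or.inr hinf)⟩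
      · rintro v ⟨u, hu | hu⟩ hvl
        · obtain ⟨hEuv, (hinf | hinf) | ⟨c, hc, hcu⟩⟩ := hu
          · exact absurd (hinf.subset (by simp)) hvl
          · exact absurd (hinf.subset (by simp)) hvl
          · have htv : Relation.TransGen E c v := Relation.TransGen.tail' hcu hEuv
            exact ⟨c, hcollF c hc, hlift c hc v htv⟩
        · obtain ⟨hEvu, (hinf | hinf) | ⟨c, hc, hcv⟩⟩ := hu
          · exact absurd (hinf.subset (by simp)) hvl
          · exact absurd (hinf.subset (by simp)) hvl
          · have hcl : c ∈ l := by
              obtain ⟨u', w', hinf, _, _⟩ := hc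
              exact hinf.subset (by simp)
            rcases (Relation.reflTransGen_iff_eq_or_transGen.mp hcv) with rfl | htv
            · exact absurd hcl hvl
            · exact ⟨c, hcollF c hc, hlift c hc v htv⟩
    have hzaF : ZActive F Z l := by
      intro u v w hinf
      have h := hza u v w hinf
      constructor
      · rintro ⟨hFuv, hFwv⟩
        rcases h.1 ⟨hFuv.1, hFwv.1⟩ with hv | ⟨z, hz, htg⟩
        · exact Or.inl hv
        · have hcv : ColliderOn E l v := ⟨u, w, hinf, hFuv.1, hFwv.1⟩
          exact Or.inr ⟨z, hz, hlift v hcv z htg⟩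
      · intro hn
        refine h.2 ?_
        rintro ⟨hEuv, hEwv⟩
        refine hn ⟨⟨hEuv, Or.inl (Or.inl (List.IsInfix.trans ⟨[], [w], rfl⟩ hinf))⟩,
          ⟨hEwv, Or.inl (Or.inr (List.IsInfix.trans ⟨[u], [], rfl⟩ hinf))⟩⟩
    have att := CAsm.Att.tree F l x y Z hxy hct hzaF
    refine hnat ⟨{a | ∃ u v : V, F u v ∧ a = CAsm.arr u v}, ?_, CAsm.ind x y Z, hind, att⟩
    rintro a ⟨u, v, hFuv, rfl⟩
    exact hFuv.1
  · -- Part 2: ∅ is complete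
    refine ⟨⟨⟨fun a h => h.elim, ?_⟩, ?_⟩, ?_⟩
    · rintro ⟨U, hU, a, ha, _⟩
      exact ha
    · rintro U hU ⟨U', hU', a, ha, _⟩
      exact ha.elim
    · intro T hT hdef a haT
      exfalso
      have key : ∀ U₀ : Set (CAsm V), U₀ ⊆ CAsm.Asms V → CAsm.Att V U₀ a → False := by
        intro U₀ hU₀A hatt
        obtain ⟨U', hU', b, hb, hatt'⟩ := hdef U₀ hU₀A ⟨U₀, subset_rfl, a, haT, hatt⟩
        obtain ⟨c, hc⟩ := att_nonempty hatt'
        exact hU' hc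
      rcases hT haT with ⟨x, y, hxy, rfl | rfl⟩ | ⟨x, y, Z, hxy, hxZ, hyZ, rfl⟩
      · refine key {CAsm.arr y x} ?_ (CAsm.Att.arrArr x y hxy)
        rintro a rfl
        exact Or.inl ⟨y, x, hxy.symm, Or.inl rfl⟩
      · refine key {CAsm.arr x y} ?_ (CAsm.Att.arrNoe x y hxy)
        rintro a rfl
        exact Or.inl ⟨x, y, hxy, Or.inl rfl⟩
      · -- attack ind x y Z via the collider tree on the single edge x → y
        set F : V → V → Prop := fun u v => u = x ∧ v = y with hF
        have hct : IsColliderTree F x y [x, y] := by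
          refine ⟨⟨by simp [hxy], rfl, rfl, ?_⟩, ?_⟩
          · exact List.isChain_cons_cons.mpr ⟨Or.inl ⟨rfl, rfl⟩, List.isChain_singleton y⟩
          · rintro v ⟨u, ⟨rfl, rfl⟩ | ⟨rfl, rfl⟩⟩ hv
            · exact absurd (by simp) hv
            · exact absurd (by simp) hv
        have hza : ZActive F Z [x, y] := by
          intro u v w hinf
          have := hinf.length_le
          simp at this
        have hatt := CAsm.Att.tree F [x, y] x y Z hxy hct hza
        refine key _ ?_ hatt
        rintro a ⟨u, v, ⟨rfl, rfl⟩, rfl⟩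
        exact Or.inl ⟨u, v, hxy, Or.inl rfl⟩
  · -- Part 3: converse fails
    intro x y hxy
    constructor
    · rintro ⟨l, ⟨hnd, hh, hl, hch⟩, _⟩
      obtain ⟨a, b, t, rfl⟩ := exists_cons_cons_of_head_last hh hl hxy
      rcases (List.isChain_cons_cons.mp hch).1 with h | h
      · exact h
      · exact h
    · exact fun h => h
end

section
/- In D_dag over variable set V with |V| = n, the number of complete extensions corresponding to the fully disconnected graph (V, ∅) is exactly 2^(n choose 2): these are precisely the subsets of {noe_{xy} : x ≠ y}. -/
namespace DagAsm

variable {V : Type}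

private def NoeSet (V : Type) : Set (DagAsm V) :=
  {a | ∃ x y : V, x ≠ y ∧ a = noe s(x, y)}

private lemma noArr_of_subset {S : Set (DagAsm V)} (hS : S ⊆ NoeSet V) :
    ∀ x y : V, arr x y ∉ S := by
  intro x y hxy
  obtain ⟨a, b, -, h⟩ := hS hxy
  exact nomatch h

private lemma complete_of_subset {S : Set (DagAsm V)} (hS : S ⊆ NoeSet V) :
    Complete S := by
  have noArr := noArr_of_subset hS
  have hAsms : S ⊆ Asms V := by
    intro a ha
    obtain ⟨x, y, hxy, h⟩ := hS ha
    exact ⟨x, y, hxy, Or.inr h⟩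
  refine ⟨⟨⟨hAsms, ?_⟩, ?_⟩, ?_⟩
  · rintro ⟨U, hU, a, haS, hatt⟩
    cases hatt with
    | arrArr x y h => exact noArr x y haS
    | noeArr x y h => exact noArr x y haS
    | arrNoe x y h => exact noArr x y (hU rfl)
    | cycle l x y h1 h2 h3 => exact noArr x y haS
  · rintro U hU ⟨W, hW, a, haS, hatt⟩
    cases hatt with
    | arrArr x y h => exact absurd haS (noArr x y)
    | noeArr x y h => exact absurd haS (noArr x y)
    | arrNoe x y h =>
      refine ⟨{noe s(x, y)}, ?_, arr x y, hW rfl, Att.noeArr x y h⟩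
      intro b hb
      rw [Set.mem_singleton_iff] at hb
      rw [hb]; exact haS
    | cycle l x y h1 h2 h3 => exact absurd haS (noArr x y)
  · intro T hT hdef t htT
    obtain ⟨x, y, hxy, harr | hnoe⟩ := hT htT
    · exfalso
      have hatk : Attacks {noe s(x, y)} T :=
        ⟨{noe s(x, y)}, le_refl _, t, htT, harr ▸ Att.noeArr x y hxy⟩
      have hsub : ({noe s(x, y)} : Set (DagAsm V)) ⊆ Asms V := by
        intro b hb
        rw [Set.mem_singleton_iff] at hb
        exact ⟨x, y, hxy, Or.inr hb⟩
      obtain ⟨W, hWS, b, hb, hatt⟩ := hdef _ hsub hatk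
      rw [Set.mem_singleton_iff] at hb
      cases hatt with
      | arrArr x' y' h => exact nomatch hb
      | noeArr x' y' h => exact nomatch hb
      | arrNoe x' y' h => exact noArr x' y' (hWS rfl)
      | cycle l x' y' h1 h2 h3 => exact nomatch hb
    · have hatk : Attacks {arr x y} T :=
        ⟨{arr x y}, le_refl _, t, htT, hnoe ▸ Att.arrNoe x y hxy⟩
      have hsub : ({arr x y} : Set (DagAsm V)) ⊆ Asms V := by
        intro b hb
        rw [Set.mem_singleton_iff] at hb
        exact ⟨x, y, hxy, Or.inl hb⟩
      obtain ⟨W, hWS, b, hb, hatt⟩ := hdef _ hsub hatk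
      rw [Set.mem_singleton_iff] at hb
      cases hatt with
      | arrArr x' y' h =>
        exfalso
        exact noArr y' x' (hWS rfl)
      | noeArr x' y' h =>
        injection hb with h1 h2
        subst h1; subst h2
        rw [hnoe]
        exact hWS rfl
      | arrNoe x' y' h => exact nomatch hb
      | cycle l x' y' h1 h2 h3 =>
        exact absurd (hWS ⟨(x', y'), h3, rfl⟩) (noArr x' y')

private lemma subset_of_complete {S : Set (DagAsm V)} (hc : Complete S)
    (noArr : ∀ x y : V, arr x y ∉ S) : S ⊆ NoeSet V := by
  intro a ha
  obtain ⟨x, y, hxy, harr | hnoe⟩ := hc.1.1.1 ha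
  · exact absurd (harr ▸ ha) (noArr x y)
  · exact ⟨x, y, hxy, hnoe⟩

private lemma noe_injective : Function.Injective (noe : Sym2 V → DagAsm V) := by
  intro a b h; injection h

private lemma card_noeSet [Fintype V] [DecidableEq V] :
    Nat.card (NoeSet V) = (Fintype.card V).choose 2 := by
  have e : {z : Sym2 V // ¬z.IsDiag} ≃ NoeSet V := by
    refine Equiv.ofBijective (fun z => ⟨noe z.1, ?_⟩) ⟨?_, ?_⟩
    · obtain ⟨z, hz⟩ := z
      induction z using Sym2.ind with
      | _ x y =>
        rw [Sym2.mk_isDiag_iff] at hz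
        exact ⟨x, y, hz, rfl⟩
    · intro a b h
      simp only [Subtype.mk.injEq] at h
      exact Subtype.ext (noe_injective h)
    · rintro ⟨a, x, y, hxy, rfl⟩
      exact ⟨⟨s(x, y), by rw [Sym2.mk_isDiag_iff]; exact hxy⟩, rfl⟩
  rw [← Nat.card_congr e, Nat.card_eq_fintype_card, Sym2.card_subtype_not_diag]

private lemma finite_noeSet [Fintype V] : (NoeSet V).Finite := by
  have heq : NoeSet V = noe '' {z : Sym2 V | ¬z.IsDiag} := by
    ext a
    constructor
    · rintro ⟨x, y, hxy, rfl⟩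
      exact ⟨s(x, y), by rw [Set.mem_setOf_eq, Sym2.mk_isDiag_iff]; exact hxy, rfl⟩
    · rintro ⟨z, hz, rfl⟩
      induction z using Sym2.ind with
      | _ x y =>
        rw [Set.mem_setOf_eq, Sym2.mk_isDiag_iff] at hz
        exact ⟨x, y, hz, rfl⟩
  rw [heq]
  exact (Set.toFinite _).image _

end DagAsm

private lemma ncard_powerset {α : Type*} (T : Set α) (hT : T.Finite) :
    Set.ncard {S : Set α | S ⊆ T} = 2 ^ Nat.card T := by
  have : {S : Set α | S ⊆ T} = 𝒫 T := rfl
  rw [this, ← Nat.card_coe_set_eq, Nat.card_congr (Equiv.Set.powerset T)]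
  have e : Set ↥T ≃ (↥T → Bool) :=
    Equiv.arrowCongr (Equiv.refl _) (Equiv.propEquivBool)
  have : Finite ↥T := hT
  rw [Nat.card_congr e, Nat.card_fun, Nat.card_eq_fintype_card (α := Bool)]
  rfl

/-- in `D_dag` over a variable set `V` with `|V| = n`, the complete
extensions corresponding to the fully disconnected graph `(V, ∅)` (those containing
no arrow assumption) are precisely the subsets of `{noe {x,y} : x ≠ y}`, and there
are exactly `2^(n choose 2)` of them. -/
theorem complete_extensions_of_disconnected_graph {V : Type} [Fintype V]
    [DecidableEq V] {n : ℕ} (hcard : Fintype.card V = n) :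
    {S : Set (DagAsm V) | DagAsm.Complete S ∧ ∀ x y : V, DagAsm.arr x y ∉ S}
        = {S : Set (DagAsm V) |
            S ⊆ {a | ∃ x y : V, x ≠ y ∧ a = DagAsm.noe s(x, y)}} ∧
      {S : Set (DagAsm V) |
        DagAsm.Complete S ∧ ∀ x y : V, DagAsm.arr x y ∉ S}.ncard = 2 ^ n.choose 2 := by
  have hset : {S : Set (DagAsm V) | DagAsm.Complete S ∧ ∀ x y : V, DagAsm.arr x y ∉ S}
      = {S : Set (DagAsm V) | S ⊆ DagAsm.NoeSet V} := by
    ext S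
    constructor
    · rintro ⟨hc, noArr⟩
      exact DagAsm.subset_of_complete hc noArr
    · intro hS
      exact ⟨DagAsm.complete_of_subset hS, DagAsm.noArr_of_subset hS⟩
  have hfin : (DagAsm.NoeSet V).Finite := DagAsm.finite_noeSet
  refine ⟨hset, ?_⟩
  rw [hset, ncard_powerset _ hfin, DagAsm.card_noeSet, hcard]
end
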